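/- Let G be a finite group acting on the right by automorphisms on a finite abelian group (V,+). Then the number of orbits of G on V equals the number of orbits of G on the set V̂ = Hom((V,+), ℂ*) of linear characters of V, where G acts on V̂ by (τ.g)(v) = τ(v.g⁻¹) for τ ∈ V̂, g ∈ G, v ∈ V. -/

import Mathlib

noncomputable section

/-- ℂˣ-valued characters are the same as ℂ-valued characters. -/
def addCharUnitsEquiv (A : Type) [AddCommGroup A] : AddChar A ℂˣ ≃ AddChar A ℂ :=
  AddChar.toMonoidHomEquiv.trans <|
    ({ toFun := fun f => (Units.coeHom ℂ).comp f
       invFun := MonoidHom.toHomUnits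
       left_inv := fun f => MonoidHom.ext fun a => Units.ext rfl
       right_inv := fun f => rfl } : (Multiplicative A →* ℂˣ) ≃ (Multiplicative A →* ℂ)).trans
      AddChar.toMonoidHomEquiv.symm

lemma card_addChar_units (A : Type) [AddCommGroup A] [Finite A] :
    Nat.card (AddChar A ℂˣ) = Nat.card A := by
  cases nonempty_fintype A
  rw [Nat.card_congr (addCharUnitsEquiv A), Nat.card_eq_fintype_card, Nat.card_eq_fintype_card,
    AddChar.card_eq]

/-- Homs vanishing on a subgroup correspond to homs from the quotient. -/
def quotHomEquiv {V M : Type*} [AddCommGroup V] [AddCommGroup M] (W : AddSubgroup V) :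
    {ψ : V →+ M // ∀ w ∈ W, ψ w = 0} ≃ ((V ⧸ W) →+ M) where
  toFun p := QuotientAddGroup.lift W p.1 p.2
  invFun χ := ⟨χ.comp (QuotientAddGroup.mk' W), fun w hw => by
    rw [AddMonoidHom.comp_apply,
      show (QuotientAddGroup.mk' W) w = 0 from (QuotientAddGroup.eq_zero_iff (N := W) w).2 hw, map_zero]⟩
  left_inv p := by ext v; rfl
  right_inv χ := by
    refine AddMonoidHom.ext fun v => QuotientAddGroup.induction_on v fun x => rfl

lemma key_count {V : Type} [AddCommGroup V] [Fintype V] (φ : AddAut V) :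
    Nat.card {τ : AddChar V ℂˣ // ∀ v, τ (φ v) = τ v} = Nat.card {v : V // φ v = v} := by
  classical
  set f : V →+ V := φ.toAddMonoidHom - AddMonoidHom.id V with hf
  have hfv : ∀ v, f v = φ v - v := fun v => rfl
  set W : AddSubgroup V := f.range with hW
  -- step A: transfer to additive homs vanishing on W
  have eA : {τ : AddChar V ℂˣ // ∀ v, τ (φ v) = τ v} ≃
      {ψ : V →+ Additive ℂˣ // ∀ w ∈ W, ψ w = 0} := by
    refine (Equiv.subtypeEquiv AddChar.toAddMonoidHomEquiv fun τ => ?_)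
    constructor
    · rintro h w ⟨v, rfl⟩
      have : (AddChar.toAddMonoidHomEquiv τ) (φ v) = (AddChar.toAddMonoidHomEquiv τ) v := by
        simp [AddChar.toAddMonoidHomEquiv, h v]
      rw [hfv, map_sub, this, sub_self]
    · intro h v
      have := h (f v) ⟨v, rfl⟩
      rw [hfv, map_sub, sub_eq_zero] at this
      simpa [AddChar.toAddMonoidHomEquiv] using this
  have eB := quotHomEquiv (M := Additive ℂˣ) W
  have eC : ((V ⧸ W) →+ Additive ℂˣ) ≃ AddChar (V ⧸ W) ℂˣ :=
    AddChar.toAddMonoidHomEquiv.symm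
  have h1 : Nat.card {τ : AddChar V ℂˣ // ∀ v, τ (φ v) = τ v} = Nat.card (V ⧸ W) := by
    rw [Nat.card_congr ((eA.trans eB).trans eC), card_addChar_units]
  -- step D: |V ⧸ W| = |ker f|
  have h2 : Nat.card V = Nat.card (V ⧸ W) * Nat.card W :=
    AddSubgroup.card_eq_card_quotient_mul_card_addSubgroup W
  have h3 : Nat.card V = Nat.card f.ker * Nat.card f.range := by
    rw [AddSubgroup.card_eq_card_quotient_mul_card_addSubgroup f.ker,
      Nat.card_congr (QuotientAddGroup.quotientKerEquivRange f).toEquiv, mul_comm]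
  have hWpos : 0 < Nat.card W := Nat.card_pos
  have hD : Nat.card (V ⧸ W) = Nat.card f.ker := by
    have : Nat.card (V ⧸ W) * Nat.card W = Nat.card f.ker * Nat.card W := by
      rw [← h2, hW, h3]
    exact Nat.eq_of_mul_eq_mul_right hWpos this
  -- step E
  have eE : {v : V // φ v = v} ≃ f.ker := by
    refine Equiv.subtypeEquivRight fun v => ?_
    rw [AddMonoidHom.mem_ker, hfv, sub_eq_zero]
  rw [h1, hD, Nat.card_congr eE]

theorem stmt_0 {G V : Type} [Group G] [Fintype G] [AddCommGroup V] [Fintype V]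
    (act : G → AddAut V) (hone : act 1 = 0)
    (hmul : ∀ g h : G, act (g * h) = act h + act g) :
    Nat.card (Quot (fun v w : V => ∃ g : G, act g v = w)) =
      Nat.card (Quot (fun τ σ : AddChar V ℂˣ => ∃ g : G, ∀ v : V, σ v = τ (act g⁻¹ v))) := by
  classical
  have hcomp : ∀ (a b : G) (v : V), act a (act b v) = act (b * a) v := fun a b v => by
    rw [hmul]; rfl
  have hc1 : ∀ (g : G) (v : V), act g (act g⁻¹ v) = v := fun g v => by
    rw [hcomp, inv_mul_cancel, hone]; rfl
  have hc2 : ∀ (g : G) (v : V), act g⁻¹ (act g v) = v := fun g v => by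
    rw [hcomp, mul_inv_cancel, hone]; rfl
  letI : SMul G V := ⟨fun g v => act g⁻¹ v⟩
  letI instV : MulAction G V :=
    { one_smul := fun v => by show act (1:G)⁻¹ v = v; rw [inv_one, hone]; rfl
      mul_smul := fun g h v => by
        show act (g * h)⁻¹ v = act g⁻¹ (act h⁻¹ v)
        rw [mul_inv_rev, hmul]; rfl }
  letI : SMul G (AddChar V ℂˣ) := ⟨fun g τ => τ.compAddMonoidHom (act g).toAddMonoidHom⟩
  have smul_char_apply : ∀ (g : G) (τ : AddChar V ℂˣ) (v : V), (g • τ) v = τ (act g v) :=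
    fun g τ v => rfl
  letI instC : MulAction G (AddChar V ℂˣ) :=
    { one_smul := fun τ => by ext v; rw [smul_char_apply, hone]; rfl
      mul_smul := fun g h τ => by
        ext v; rw [smul_char_apply, smul_char_apply, smul_char_apply, hcomp] }
  haveI : Finite (AddChar V ℂˣ) := Finite.of_equiv _ (addCharUnitsEquiv V).symm
  -- identify the Quots with orbit quotients
  have eV : Quot (fun v w : V => ∃ g : G, act g v = w) ≃
      Quotient (MulAction.orbitRel G V) := by
    refine Quot.congrRight fun v w => ?_
    show (∃ g : G, act g v = w) ↔ v ∈ MulAction.orbit G w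
    constructor
    · rintro ⟨g, rfl⟩
      exact ⟨g, hc2 g v⟩
    · rintro ⟨g, rfl⟩
      exact ⟨g, hc1 g w⟩
  have eC : Quot (fun τ σ : AddChar V ℂˣ => ∃ g : G, ∀ v : V, σ v = τ (act g⁻¹ v)) ≃
      Quotient (MulAction.orbitRel G (AddChar V ℂˣ)) := by
    refine Quot.congrRight fun τ σ => ?_
    show (∃ g : G, ∀ v : V, σ v = τ (act g⁻¹ v)) ↔ τ ∈ MulAction.orbit G σ
    constructor
    · rintro ⟨g, h⟩
      refine ⟨g, ?_⟩
      ext v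
      rw [smul_char_apply, h (act g v), hc2]
    · rintro ⟨g, rfl⟩
      refine ⟨g, fun v => ?_⟩
      rw [smul_char_apply, hc1]
  rw [Nat.card_congr eV, Nat.card_congr eC]
  -- Burnside on both sides
  haveI : ∀ g : G, Fintype (MulAction.fixedBy V g) := fun g => Fintype.ofFinite _
  haveI : ∀ g : G, Fintype (MulAction.fixedBy (AddChar V ℂˣ) g) := fun g => Fintype.ofFinite _
  haveI : Fintype (Quotient (MulAction.orbitRel G V)) := Fintype.ofFinite _
  haveI : Fintype (Quotient (MulAction.orbitRel G (AddChar V ℂˣ))) := Fintype.ofFinite _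
  have b1 := MulAction.sum_card_fixedBy_eq_card_orbits_mul_card_group G V
  have b2 := MulAction.sum_card_fixedBy_eq_card_orbits_mul_card_group G (AddChar V ℂˣ)
  have hfix : ∀ g : G, Fintype.card (MulAction.fixedBy (AddChar V ℂˣ) g) =
      Fintype.card (MulAction.fixedBy V g) := by
    intro g
    rw [← Nat.card_eq_fintype_card, ← Nat.card_eq_fintype_card]
    have e1 : MulAction.fixedBy (AddChar V ℂˣ) g ≃ {τ : AddChar V ℂˣ // ∀ v, τ (act g v) = τ v} := by
      refine Equiv.subtypeEquivRight fun τ => ?_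
      rw [MulAction.mem_fixedBy]
      constructor
      · intro h v
        conv_rhs => rw [← h]
        rw [smul_char_apply]
      · intro h
        ext v
        rw [smul_char_apply, h]
    have e2 : MulAction.fixedBy V g ≃ {v : V // act g v = v} := by
      refine Equiv.subtypeEquivRight fun v => ?_
      rw [MulAction.mem_fixedBy]
      show act g⁻¹ v = v ↔ act g v = v
      constructor
      · intro h; have h2 := hc1 g v; rwa [h] at h2
      · intro h; have h2 := hc2 g v; rwa [h] at h2
    rw [Nat.card_congr e1, Nat.card_congr e2]
    exact key_count (act g)
  have : Fintype.card (Quotient (MulAction.orbitRel G V)) * Fintype.card G =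
      Fintype.card (Quotient (MulAction.orbitRel G (AddChar V ℂˣ))) * Fintype.card G := by
    rw [← b1, ← b2]
    exact Finset.sum_congr rfl fun g _ => (hfix g).symm
  rw [Nat.card_eq_fintype_card, Nat.card_eq_fintype_card]
  exact Nat.eq_of_mul_eq_mul_right Fintype.card_pos this
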